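/- Let S1, S2 be finite subsets of a finite linearly ordered set Ω with |S1| = f1, |S2| = f2, |S1 ∩ S2| = a, and S1 ∪ S2 nonempty. If π is a uniformly random permutation of Ω and z1 = min(π(S1)), z2 = min(π(S2)), then Pr(z1 > z2) = (f2 - a) / (f1 + f2 - a). -/

import Mathlib

open Finset

theorem minwise_greater_prob {Ω : Type*} [Fintype Ω] [LinearOrder Ω] [DecidableEq Ω]
    (S1 S2 : Finset Ω) (f1 f2 a : ℕ)
    (hf1 : S1.card = f1) (hf2 : S2.card = f2) (ha : (S1 ∩ S2).card = a)
    (hne : (S1 ∪ S2).Nonempty) :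
    ((Finset.univ.filter
        (fun π : Equiv.Perm Ω => (S2.image π).min < (S1.image π).min)).card : ℝ)
      / (Fintype.card (Equiv.Perm Ω) : ℝ)
      = ((f2 : ℝ) - (a : ℝ)) / ((f1 : ℝ) + (f2 : ℝ) - (a : ℝ)) := by
  classical
  set U : Finset Ω := S1 ∪ S2 with hU
  have hUne : ∀ π : Equiv.Perm Ω, (U.image π).Nonempty := fun π => hne.image π
  set A : Equiv.Perm Ω → Ω := fun π => π.symm ((U.image π).min' (hUne π)) with hA
  have hπA : ∀ π : Equiv.Perm Ω, π (A π) = (U.image π).min' (hUne π) := fun π => by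
    simp [hA]
  have hAmem : ∀ (π : Equiv.Perm Ω) (S : Finset Ω),
      A π ∈ S ↔ (((U.image π).min' (hUne π)) ∈ S.image π) := by
    intro π S
    constructor
    · intro h
      exact mem_image.2 ⟨A π, h, hπA π⟩
    · intro h
      obtain ⟨u, hu, hu2⟩ := mem_image.1 h
      have : A π = u := by
        simp [hA, ← hu2]
      rwa [this]
  have hAU : ∀ π : Equiv.Perm Ω, A π ∈ U := fun π =>
    (hAmem π U).2 (min'_mem _ _)
  -- event equivalence
  have hEv : ∀ π : Equiv.Perm Ω,
      ((S2.image π).min < (S1.image π).min ↔ A π ∈ S2 \ S1) := by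
    intro π
    set m := (U.image π).min' (hUne π) with hm
    have hmU : m ∈ U.image π := min'_mem _ _
    have hmle : ∀ b ∈ U.image π, m ≤ b := fun b hb => min'_le _ b hb
    have hle1 : (m : WithTop Ω) ≤ (S1.image π).min := by
      apply Finset.le_min
      intro b hb
      exact_mod_cast hmle b (by
        refine mem_of_subset (image_subset_image ?_) hb
        exact subset_union_left)
    have hle2 : (m : WithTop Ω) ≤ (S2.image π).min := by
      apply Finset.le_min
      intro b hb
      exact_mod_cast hmle b (by
        refine mem_of_subset (image_subset_image ?_) hb
        exact subset_union_right)
    have hmem12 : m ∈ S1.image π ∨ m ∈ S2.image π := by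
      rw [hU, image_union, mem_union] at hmU
      exact hmU
    rw [mem_sdiff, hAmem π S2, hAmem π S1, ← hm]
    constructor
    · intro hlt
      have h1 : m ∉ S1.image π := by
        intro hmem
        have : (S1.image π).min ≤ (m : WithTop Ω) := min_le hmem
        exact absurd (lt_of_lt_of_le hlt (le_trans this hle2)) (lt_irrefl _)
      exact ⟨hmem12.resolve_left h1, h1⟩
    · rintro ⟨h2, h1⟩
      have hz2 : (S2.image π).min = (m : WithTop Ω) :=
        le_antisymm (min_le h2) hle2
      have hz1 : (S1.image π).min ≠ (m : WithTop Ω) := by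
        intro hmineq
        exact h1 (mem_of_min hmineq)
      rw [hz2]
      exact lt_of_le_of_ne hle1 (Ne.symm hz1)
  -- fibers all have the same cardinality
  have hfiber : ∀ x ∈ U, ∀ y ∈ U,
      (univ.filter fun π : Equiv.Perm Ω => A π = x).card
        = (univ.filter fun π : Equiv.Perm Ω => A π = y).card := by
    intro x hx y hy
    have himg : ∀ π : Equiv.Perm Ω, U.image (π * Equiv.swap x y) = U.image π := by
      intro π
      have : U.image (Equiv.swap x y : Equiv.Perm Ω) = U := by
        ext z
        simp only [mem_image]
        constructor
        · rintro ⟨u, hu, rfl⟩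
          rcases eq_or_ne u x with rfl | hux
          · simpa [Equiv.swap_apply_left] using hy
          rcases eq_or_ne u y with rfl | huy
          · simpa [Equiv.swap_apply_right] using hx
          · rwa [Equiv.swap_apply_of_ne_of_ne hux huy]
        · intro hz
          refine ⟨Equiv.swap x y z, ?_, by simp⟩
          rcases eq_or_ne z x with rfl | hzx
          · simpa [Equiv.swap_apply_left] using hy
          rcases eq_or_ne z y with rfl | hzy
          · simpa [Equiv.swap_apply_right] using hx
          · rwa [Equiv.swap_apply_of_ne_of_ne hzx hzy]
      calc U.image (π * Equiv.swap x y)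
          = (U.image (Equiv.swap x y : Equiv.Perm Ω)).image π := by
            rw [image_image]; rfl
        _ = U.image π := by rw [this]
    have hAswap : ∀ π : Equiv.Perm Ω,
        A (π * Equiv.swap x y) = Equiv.swap x y (A π) := by
      intro π
      have hmin : (U.image (π * Equiv.swap x y)).min' (hUne _)
          = (U.image π).min' (hUne _) := by
        congr 1
        exact himg π
      simp only [hA]
      rw [hmin]
      simp [Equiv.Perm.mul_def]
    apply Finset.card_bij' (fun π _ => π * Equiv.swap x y) (fun π _ => π * Equiv.swap x y)
    · intro π hπ
      have := (mem_filter.1 hπ).2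
      rw [mem_filter]
      refine ⟨mem_univ _, ?_⟩
      rw [hAswap, this, Equiv.swap_apply_left]
    · intro π hπ
      have := (mem_filter.1 hπ).2
      rw [mem_filter]
      refine ⟨mem_univ _, ?_⟩
      rw [hAswap, this, Equiv.swap_apply_right]
    · intro π _
      simp [mul_assoc]
    · intro π _
      simp [mul_assoc]
  obtain ⟨x0, hx0⟩ := hne
  set c := (univ.filter fun π : Equiv.Perm Ω => A π = x0).card with hc
  have htotal : Fintype.card (Equiv.Perm Ω) = U.card * c := by
    have h1 : (univ : Finset (Equiv.Perm Ω)).card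
        = ∑ x ∈ U, (univ.filter fun π : Equiv.Perm Ω => A π = x).card :=
      card_eq_sum_card_fiberwise (fun π _ => hAU π)
    rw [Fintype.card, h1]
    rw [Finset.sum_congr rfl (fun x hx => hfiber x hx x0 hx0)]
    simp [mul_comm, hc]
  set T : Finset Ω := S2 \ S1 with hT
  have hTU : T ⊆ U := fun z hz => by
    rw [hU, mem_union]; exact Or.inr (mem_sdiff.1 hz).1
  have hEcard : (univ.filter
      (fun π : Equiv.Perm Ω => (S2.image π).min < (S1.image π).min)).card
      = T.card * c := by
    have hE : (univ.filter
        (fun π : Equiv.Perm Ω => (S2.image π).min < (S1.image π).min))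
        = univ.filter (fun π : Equiv.Perm Ω => A π ∈ T) := by
      apply filter_congr
      intro π _
      simpa using hEv π
    rw [hE]
    have h1 : (univ.filter (fun π : Equiv.Perm Ω => A π ∈ T)).card
        = ∑ x ∈ T, ((univ.filter (fun π : Equiv.Perm Ω => A π ∈ T)).filter
            fun π => A π = x).card :=
      card_eq_sum_card_fiberwise (fun π hπ => (mem_filter.1 hπ).2)
    rw [h1]
    have h2 : ∀ x ∈ T, ((univ.filter (fun π : Equiv.Perm Ω => A π ∈ T)).filter
        fun π => A π = x).card
        = (univ.filter fun π : Equiv.Perm Ω => A π = x).card := by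
      intro x hx
      congr 1
      rw [filter_filter]
      apply filter_congr
      intro π _
      constructor
      · exact fun h => h.2
      · exact fun h => ⟨h ▸ hx, h⟩
    rw [Finset.sum_congr rfl h2,
      Finset.sum_congr rfl (fun x hx => hfiber x (hTU hx) x0 hx0)]
    simp [mul_comm, hc]
  have hcpos : 0 < c := by
    rcases Nat.eq_zero_or_pos c with h | h
    · have hpos := Fintype.card_pos (α := Equiv.Perm Ω)
      rw [htotal, h, mul_zero] at hpos
      exact absurd hpos (lt_irrefl 0)
    · exact h
  -- cardinalities of T and U
  have hTc : (T.card : ℝ) = (f2 : ℝ) - a := by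
    have h := Finset.card_sdiff_add_card_inter S2 S1
    rw [inter_comm, ha, hf2] at h
    have : (T.card : ℝ) + a = f2 := by exact_mod_cast h
    linarith
  have hUc : (U.card : ℝ) = (f1 : ℝ) + f2 - a := by
    have h := Finset.card_union_add_card_inter S1 S2
    rw [ha, hf1, hf2] at h
    have : (U.card : ℝ) + a = f1 + f2 := by exact_mod_cast h
    linarith
  rw [hEcard, htotal]
  push_cast
  rw [mul_div_mul_right _ _ (by exact_mod_cast hcpos.ne' : (c : ℝ) ≠ 0), hTc, hUc]
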